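/- The function x ↦ (1 - cos(x)/cos(x/2))/x² is strictly increasing on (0, π/2). -/

import Mathlib

open Real

-- Cusa–Huygens: 3 sin t < t (2 + cos t) on (0, π/2)
lemma cusa {t : ℝ} (ht : 0 < t) (ht2 : t < π / 2) : 3 * sin t < t * (2 + cos t) := by
  have key : StrictMonoOn (fun u : ℝ => u * (2 + cos u) - 3 * sin u) (Set.Icc 0 (π / 2)) := by
    apply strictMonoOn_of_deriv_pos (convex_Icc _ _)
    · fun_prop
    · intro u hu
      rw [interior_Icc] at hu
      obtain ⟨hu0, hu2⟩ := hu
      have hd : HasDerivAt (fun u : ℝ => u * (2 + cos u) - 3 * sin u)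
          (1 * (2 + cos u) + u * (0 + -sin u) - 3 * cos u) u := by
        exact (((hasDerivAt_id u).mul ((hasDerivAt_const u 2).add (Real.hasDerivAt_cos u)))).sub
          ((Real.hasDerivAt_sin u).const_mul 3)
      rw [hd.deriv]
      have hs : 0 < sin (u / 2) := sin_pos_of_pos_of_lt_pi (by linarith) (by
        have := pi_pos; linarith)
      have hc : 0 < cos (u / 2) := cos_pos_of_mem_Ioo ⟨by have := pi_pos; linarith, by linarith⟩
      have htan : u / 2 < tan (u / 2) := lt_tan (by linarith) (by linarith)
      rw [tan_eq_sin_div_cos, lt_div_iff₀ hc] at htan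
      have hpyth := sin_sq_add_cos_sq (u / 2)
      have hcos : cos u = 1 - 2 * sin (u / 2) ^ 2 := by
        have h := Real.cos_sq (u / 2)
        have h2 : (2:ℝ) * (u / 2) = u := by ring
        rw [h2] at h
        nlinarith [h, hpyth]
      have hsin : sin u = 2 * sin (u / 2) * cos (u / 2) := by
        have h := Real.sin_two_mul (u / 2)
        have h2 : (2:ℝ) * (u / 2) = u := by ring
        rw [h2] at h
        linarith
      rw [hcos, hsin]
      nlinarith [mul_pos hs (sub_pos.mpr htan)]
  have h0 : (0 : ℝ) ∈ Set.Icc 0 (π / 2) := ⟨le_refl 0, by positivity⟩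
  have hmem : t ∈ Set.Icc 0 (π / 2) := ⟨ht.le, ht2.le⟩
  have := key h0 hmem ht
  simp at this
  linarith

theorem stmt_6 :
    StrictMonoOn (fun x : ℝ => (1 - cos x / cos (x / 2)) / x ^ 2) (Set.Ioo 0 (π / 2)) := by
  apply strictMonoOn_of_deriv_pos (convex_Ioo _ _)
  · apply ContinuousOn.div
    · apply ContinuousOn.sub continuousOn_const
      apply ContinuousOn.div (by fun_prop) (by fun_prop)
      intro x hx
      obtain ⟨h1, h2⟩ := hx
      have := pi_pos
      exact ne_of_gt (cos_pos_of_mem_Ioo ⟨by linarith, by linarith⟩)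
    · fun_prop
    · intro x hx
      have : (0:ℝ) < x := hx.1
      positivity
  · intro x hx
    rw [interior_Ioo] at hx
    obtain ⟨hx0, hx2⟩ := hx
    set s := sin (x / 2) with hs_def
    set c := cos (x / 2) with hc_def
    have hs : 0 < s := sin_pos_of_pos_of_lt_pi (by linarith) (by have := pi_pos; linarith)
    have hc : 0 < c := cos_pos_of_mem_Ioo ⟨by have := pi_pos; linarith, by linarith⟩
    have hsc : s ^ 2 + c ^ 2 = 1 := sin_sq_add_cos_sq (x / 2)
    have hc1 : c < 1 := by nlinarith
    have hcosx : cos x = 2 * c ^ 2 - 1 := by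
      have h := Real.cos_two_mul (x / 2)
      have h2 : (2:ℝ) * (x / 2) = x := by ring
      rw [h2] at h
      rw [h]
    have hsinx : sin x = 2 * s * c := by
      have h := Real.sin_two_mul (x / 2)
      have h2 : (2:ℝ) * (x / 2) = x := by ring
      rw [h2] at h
      rw [h]
    have hdc2 : HasDerivAt (fun y : ℝ => cos (y / 2)) (-s * (1 / 2)) x := by
      have h := (Real.hasDerivAt_cos (x / 2)).comp x ((hasDerivAt_id x).div_const 2)
      exact h
    have hdnum : HasDerivAt (fun y : ℝ => 1 - cos y / cos (y / 2))
        (-(((-sin x) * c - cos x * (-s * (1 / 2))) / c ^ 2)) x := by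
      have := ((Real.hasDerivAt_cos x).div hdc2 (ne_of_gt hc))
      exact ((hasDerivAt_const x (1:ℝ)).sub this).congr_deriv (by rw [zero_sub])
    have hdpow : HasDerivAt (fun y : ℝ => y ^ 2) (2 * x ^ 1) x := by
      simpa using hasDerivAt_pow 2 x
    have hx2ne : x ^ 2 ≠ 0 := by positivity
    have hd : HasDerivAt (fun y : ℝ => (1 - cos y / cos (y / 2)) / y ^ 2)
        (((-(((-sin x) * c - cos x * (-s * (1 / 2))) / c ^ 2)) * x ^ 2
          - (1 - cos x / c) * (2 * x ^ 1)) / (x ^ 2) ^ 2) x := hdnum.div hdpow hx2ne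
    rw [hd.deriv]
    rw [hcosx, hsinx]
    have hcu := cusa (t := x / 2) (by linarith) (by linarith)
    rw [← hs_def, ← hc_def] at hcu
    have key : x * s * (2 * c ^ 2 + 1) > 4 * c * (1 - c) * (1 + 2 * c) := by
      have h1 : 3 * s * (s * (2 * c ^ 2 + 1)) < (x / 2 * (2 + c)) * (s * (2 * c ^ 2 + 1)) := by
        apply mul_lt_mul_of_pos_right hcu
        positivity
      nlinarith [sq_nonneg (1 - c), mul_pos hc hs, sq_nonneg c, mul_pos (mul_pos hc hc) hs]
    apply div_pos
    · have hnum : (-((-(2 * s * c) * c - (2 * c ^ 2 - 1) * (-s * (1 / 2))) / c ^ 2)) * x ^ 2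
          - (1 - (2 * c ^ 2 - 1) / c) * (2 * x ^ 1)
          = x * ((x * s * (2 * c ^ 2 + 1)) - 4 * c * (1 - c) * (1 + 2 * c)) / (2 * c ^ 2) := by
        field_simp
        ring
      rw [hnum]
      apply div_pos
      · exact mul_pos hx0 (by linarith)
      · positivity
    · positivity
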